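/- arXiv:1607.00514 — 2 statements merged into one kernel-verified Lean document; each statement's English description precedes it below -/
import Mathlib

section
/- Let A_1,…,A_N be real d×d matrices and define L(U) = Σ_{n=1}^N ‖low(Uᵀ A_n U)‖² for orthogonal U. Then for every orthogonal U and every skew-symmetric X, the directional derivative satisfies d/dt L(U e^{tX})|_{t=0} = Tr(Xᵀ (S − Sᵀ)), where S = Σ_{n=1}^N [Uᵀ A_nᵀ U, low(Uᵀ A_n U)] and [A,B] = AB − BA. In particular, U is a stationary point of L on the orthogonal group if and only if S = Sᵀ. -/
open Matrix Kronecker BigOperators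

noncomputable section

/-- Square real matrices. -/
abbrev Mat (d : ℕ) := Matrix (Fin d) (Fin d) ℝ

/-- Strictly lower-triangular part: `[low A]_{ij} = A_{ij}` if `i > j`, else `0`. -/
def lowPart {d : ℕ} (A : Mat d) : Mat d :=
  Matrix.of fun i j => if (j : ℕ) < (i : ℕ) then A i j else 0

/-- Frobenius norm. -/
def frob {m n : Type*} [Fintype m] [Fintype n] (A : Matrix m n ℝ) : ℝ :=
  Real.sqrt (∑ i, ∑ j, (A i j) ^ 2)

/-- Euclidean norm of a vector. -/
def euclNorm {m : Type*} [Fintype m] (v : m → ℝ) : ℝ :=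
  Real.sqrt (∑ i, (v i) ^ 2)

/-- Largest singular value. -/
def sigMax {m n : Type*} [Fintype m] [Fintype n] (A : Matrix m n ℝ) : ℝ :=
  sSup {r | ∃ x : n → ℝ, euclNorm x = 1 ∧ r = euclNorm (A.mulVec x)}

/-- Smallest singular value. -/
def sigMin {m n : Type*} [Fintype m] [Fintype n] (A : Matrix m n ℝ) : ℝ :=
  sInf {r | ∃ x : n → ℝ, euclNorm x = 1 ∧ r = euclNorm (A.mulVec x)}

/-- Spectral norm (largest singular value). -/
def specNorm {m n : Type*} [Fintype m] [Fintype n] (A : Matrix m n ℝ) : ℝ := sigMax A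

/-- Condition number `κ(A) = σ_max(A)/σ_min(A)`. -/
def condNum {m n : Type*} [Fintype m] [Fintype n] (A : Matrix m n ℝ) : ℝ :=
  sigMax A / sigMin A

/-- Matrix exponential. -/
def matExp {d : ℕ} (A : Mat d) : Mat d := ∑' k : ℕ, ((k.factorial : ℝ))⁻¹ • A ^ k

/-- Column-wise vectorization: index `(j, i)` holds the `(i, j)` entry. -/
def vecM {d : ℕ} (A : Mat d) : Fin d × Fin d → ℝ := fun p => A p.2 p.1

/-- Inverse of the column-wise vectorization. -/
def matM {d : ℕ} (v : Fin d × Fin d → ℝ) : Mat d := Matrix.of fun i j => v (j, i)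

/-- The `d² × d²` diagonal 0/1 matrix `Low` with `Low (vec A) = vec (low A)`. -/
def lowOp (d : ℕ) : Matrix (Fin d × Fin d) (Fin d × Fin d) ℝ :=
  Matrix.diagonal fun p => if (p.1 : ℕ) < (p.2 : ℕ) then 1 else 0

/-- `P` is a valid `P_low` projector: `P Pᵀ = 1` and `Pᵀ P = Low`. -/
def IsPlow {d k : ℕ} (P : Matrix (Fin k) (Fin d × Fin d) ℝ) : Prop :=
  P * Pᵀ = 1 ∧ Pᵀ * P = lowOp d

/-- Orthogonal matrix. -/
def IsOrtho {d : ℕ} (U : Mat d) : Prop := Uᵀ * U = 1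

/-- Skew-symmetric matrix. -/
def IsSkew {d : ℕ} (X : Mat d) : Prop := Xᵀ = -X

/-- Matrix commutator. -/
def mcomm {d : ℕ} (A B : Mat d) : Mat d := A * B - B * A

/-- `U₀` is an exact joint triangularizer of the family `M`. -/
def ExactTriang {d N : ℕ} (U₀ : Mat d) (M : Fin N → Mat d) : Prop :=
  IsOrtho U₀ ∧ ∀ n, lowPart (U₀ᵀ * M n * U₀) = 0

/-- The joint triangularization loss `L(U) = Σₙ ‖low(Uᵀ M̂ₙ U)‖²`. -/
def Loss {d N : ℕ} (Mh : Fin N → Mat d) (U : Mat d) : ℝ :=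
  ∑ n, (frob (lowPart (Uᵀ * Mh n * U))) ^ 2

/-- Stationary point of the loss on the orthogonal group: the Riemannian
gradient vanishes, i.e. all directional derivatives along skew directions vanish. -/
def IsStationaryLoss {d N : ℕ} (Mh : Fin N → Mat d) (U : Mat d) : Prop :=
  IsOrtho U ∧ ∀ X : Mat d, IsSkew X →
    deriv (fun t : ℝ => Loss Mh (U * matExp (t • X))) 0 = 0

/-- The operator `t̃ = P_low (1 ⊗ Aᵀ − A ⊗ 1) P_lowᵀ`. -/
def ttil {d k : ℕ} (P : Matrix (Fin k) (Fin d × Fin d) ℝ) (A : Mat d) :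
    Matrix (Fin k) (Fin k) ℝ :=
  P * ((1 : Mat d) ⊗ₖ Aᵀ - A ⊗ₖ (1 : Mat d)) * Pᵀ

/-- The joint eigengap `γ = min_{i<i'} Σₙ (Λ_{ni} − Λ_{ni'})²`. -/
def gapMin {d N : ℕ} (Λ : Fin N → Fin d → ℝ) : ℝ :=
  sInf {r | ∃ i i' : Fin d, i < i' ∧ r = ∑ n, (Λ n i - Λ n i') ^ 2}


section AuxGrad

attribute [local instance] Matrix.linftyOpNormedRing Matrix.linftyOpNormedAlgebra

private theorem matExp_eq' {d : ℕ} (A : Mat d) : matExp A = NormedSpace.exp A := by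
  rw [NormedSpace.exp_eq_tsum ℝ]; rfl

private theorem matExp_zero' {d : ℕ} : matExp (0 : Mat d) = 1 := by
  rw [matExp_eq', NormedSpace.exp_zero]

private theorem hasDerivAt_matExp' {d : ℕ} (X : Mat d) :
    HasDerivAt (fun t : ℝ => matExp (t • X)) X 0 := by
  have h := hasDerivAt_exp_smul_const (𝕂 := ℝ) X 0
  simp only [zero_smul, NormedSpace.exp_zero, one_mul] at h
  rw [show (fun t : ℝ => matExp (t • X)) = fun t => NormedSpace.exp (t • X) from funext fun t => matExp_eq' _]
  exact h

private def entryL {d : ℕ} (i j : Fin d) : Mat d →ₗ[ℝ] ℝ where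
  toFun E := E i j
  map_add' _ _ := rfl
  map_smul' _ _ := rfl

private def transL {d : ℕ} : Mat d →ₗ[ℝ] Mat d where
  toFun := Matrix.transpose
  map_add' := Matrix.transpose_add
  map_smul' := Matrix.transpose_smul

private theorem hasDerivAt_conj' {d : ℕ} (M X : Mat d) (i j : Fin d) :
    HasDerivAt (fun t : ℝ => ((matExp (t • X))ᵀ * M * matExp (t • X)) i j)
      ((Xᵀ * M + M * X) i j) 0 := by
  have hE := hasDerivAt_matExp' X
  have hEt : HasDerivAt (fun t : ℝ => (matExp (t • X))ᵀ) Xᵀ 0 := by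
    have := (LinearMap.toContinuousLinearMap (transL (d := d))).hasFDerivAt
      (x := matExp ((0:ℝ) • X))
    exact this.comp_hasDerivAt 0 hE
  have h1 : HasDerivAt (fun t : ℝ => (matExp (t • X))ᵀ * M) (Xᵀ * M) 0 := hEt.mul_const M
  have h2 := h1.mul hE
  simp only [zero_smul, matExp_zero', Matrix.transpose_one, one_mul, mul_one] at h2
  have := (LinearMap.toContinuousLinearMap (entryL (d := d) i j)).hasFDerivAt
    (x := (matExp ((0:ℝ) • X))ᵀ * M * matExp ((0:ℝ) • X))
  exact this.comp_hasDerivAt 0 h2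

private theorem loss_comp_eq' {d N : ℕ} (A : Fin N → Mat d) (U : Mat d) (X : Mat d) (t : ℝ) :
    Loss A (U * matExp (t • X)) =
      ∑ n, ∑ i, ∑ j,
        (lowPart ((matExp (t • X))ᵀ * (Uᵀ * A n * U) * matExp (t • X)) i j) ^ 2 := by
  unfold Loss frob
  congr 1; funext n
  rw [Real.sq_sqrt (by positivity)]
  congr 2
  rw [Matrix.transpose_mul]
  noncomm_ring

private theorem hasDerivAt_loss' {d N : ℕ} (A : Fin N → Mat d) (U : Mat d) (X : Mat d) :
    HasDerivAt (fun t : ℝ => Loss A (U * matExp (t • X)))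
      (∑ n, ∑ i : Fin d, ∑ j : Fin d, if (j : ℕ) < (i : ℕ) then
        2 * (Uᵀ * A n * U) i j * ((Xᵀ * (Uᵀ * A n * U) + (Uᵀ * A n * U) * X) i j) else 0) 0 := by
  simp only [loss_comp_eq']
  apply HasDerivAt.fun_sum; intro n _
  apply HasDerivAt.fun_sum; intro i _
  apply HasDerivAt.fun_sum; intro j _
  set M := Uᵀ * A n * U with hM
  by_cases h : (j : ℕ) < (i : ℕ)
  · simp only [lowPart, Matrix.of_apply, h, if_true]
    have := (hasDerivAt_conj' M X i j).fun_pow 2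
    simp only [zero_smul, matExp_zero', Matrix.transpose_one, one_mul, mul_one] at this
    convert this using 1
    · rfl
    ring
  · simp only [lowPart, Matrix.of_apply, h, if_false]
    simpa using hasDerivAt_const (0:ℝ) (0:ℝ)

end AuxGrad

private theorem trace_entry_sum' {d : ℕ} (L D : Mat d) :
    Matrix.trace (Lᵀ * D) = ∑ i : Fin d, ∑ j : Fin d, L i j * D i j := by
  simp only [Matrix.trace, Matrix.diag, Matrix.mul_apply, Matrix.transpose_apply]
  rw [Finset.sum_comm]

private theorem sum_eq_trace' {d : ℕ} (M X : Mat d) (hX : Xᵀ = -X) :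
    (∑ i : Fin d, ∑ j : Fin d, if (j : ℕ) < (i : ℕ) then
        2 * M i j * ((Xᵀ * M + M * X) i j) else 0)
      = Matrix.trace (Xᵀ * (mcomm Mᵀ (lowPart M) - (mcomm Mᵀ (lowPart M))ᵀ)) := by
  set L := lowPart M with hL
  set D := Xᵀ * M + M * X with hD
  have step1 : (∑ i : Fin d, ∑ j : Fin d, if (j : ℕ) < (i : ℕ) then
      2 * M i j * (D i j) else 0) = 2 * Matrix.trace (Lᵀ * D) := by
    rw [trace_entry_sum', Finset.mul_sum]
    apply Finset.sum_congr rfl; intro i _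
    rw [Finset.mul_sum]
    apply Finset.sum_congr rfl; intro j _
    by_cases h : (j : ℕ) < (i : ℕ)
    · have h' : j < i := h
      simp only [hL, lowPart, Matrix.of_apply, if_pos h, if_pos h']; ring
    · have h' : ¬ j < i := h
      simp only [hL, lowPart, Matrix.of_apply, if_neg h, if_neg h']; ring
  rw [step1]
  have h1 : Matrix.trace (Xᵀ * (Mᵀ * L)) = Matrix.trace (Lᵀ * (M * X)) := by
    conv_rhs => rw [← Matrix.trace_transpose]
    simp [Matrix.transpose_mul, Matrix.mul_assoc]
  have h2 : Matrix.trace (Xᵀ * (L * Mᵀ)) = -Matrix.trace (Lᵀ * (Xᵀ * M)) := by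
    rw [← Matrix.trace_transpose (Xᵀ * (L * Mᵀ))]
    simp only [Matrix.transpose_mul, Matrix.transpose_transpose]
    rw [Matrix.trace_mul_comm, ← Matrix.mul_assoc, Matrix.trace_mul_comm]
    rw [hX]
    simp [Matrix.mul_neg, Matrix.neg_mul]
  have h3 : Matrix.trace (Xᵀ * (Lᵀ * M)) = -Matrix.trace (Lᵀ * (M * X)) := by
    rw [hX]
    simp only [Matrix.neg_mul, Matrix.trace_neg, neg_inj]
    rw [Matrix.trace_mul_comm, Matrix.mul_assoc]
  have h4 : Matrix.trace (Xᵀ * (M * Lᵀ)) = Matrix.trace (Lᵀ * (Xᵀ * M)) := by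
    rw [← Matrix.mul_assoc, Matrix.trace_mul_comm]
  have expand : Matrix.trace (Xᵀ * (mcomm Mᵀ L - (mcomm Mᵀ L)ᵀ)) =
      Matrix.trace (Xᵀ * (Mᵀ * L)) - Matrix.trace (Xᵀ * (L * Mᵀ))
      - Matrix.trace (Xᵀ * (Lᵀ * M)) + Matrix.trace (Xᵀ * (M * Lᵀ)) := by
    simp only [mcomm, Matrix.transpose_sub, Matrix.transpose_mul, Matrix.transpose_transpose,
      Matrix.mul_sub, Matrix.trace_sub]
    ring
  have expand2 : Matrix.trace (Lᵀ * D) =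
      Matrix.trace (Lᵀ * (Xᵀ * M)) + Matrix.trace (Lᵀ * (M * X)) := by
    rw [hD, Matrix.mul_add, Matrix.trace_add]
  rw [expand, expand2, h1, h2, h3, h4]; ring

private theorem eq_zero_of_trace' {d : ℕ} (B : Mat d) (h : Matrix.trace (Bᵀ * B) = 0) :
    B = 0 := by
  have h2 : ∑ j : Fin d, ∑ k : Fin d, (B k j) ^ 2 = 0 := by
    simpa [Matrix.trace, Matrix.diag, Matrix.mul_apply, Matrix.transpose_apply, sq]
      using h
  ext i j
  have hj := (Finset.sum_eq_zero_iff_of_nonneg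
    (fun _ _ => Finset.sum_nonneg fun _ _ => sq_nonneg _)).mp h2 j (Finset.mem_univ _)
  have hi := (Finset.sum_eq_zero_iff_of_nonneg
    (fun _ _ => sq_nonneg _)).mp hj i (Finset.mem_univ _)
  simpa using sq_eq_zero_iff.mp hi

/-- the directional derivative of the loss along a skew direction
is `Tr(Xᵀ(S − Sᵀ))` with `S = Σₙ [Uᵀ Aₙᵀ U, low(Uᵀ Aₙ U)]`; in particular `U` is
a stationary point iff `S = Sᵀ`. -/
theorem loss_gradient_formula {d N : ℕ} (A : Fin N → Mat d) (U : Mat d)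
    (hU : IsOrtho U) :
    (∀ X : Mat d, IsSkew X →
        deriv (fun t : ℝ => Loss A (U * matExp (t • X))) 0 =
          Matrix.trace (Xᵀ *
            ((∑ n, mcomm (Uᵀ * (A n)ᵀ * U) (lowPart (Uᵀ * A n * U))) -
              (∑ n, mcomm (Uᵀ * (A n)ᵀ * U) (lowPart (Uᵀ * A n * U)))ᵀ))) ∧
    (IsStationaryLoss A U ↔
      (∑ n, mcomm (Uᵀ * (A n)ᵀ * U) (lowPart (Uᵀ * A n * U))) =
        (∑ n, mcomm (Uᵀ * (A n)ᵀ * U) (lowPart (Uᵀ * A n * U)))ᵀ) := by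
  have key : ∀ X : Mat d, IsSkew X →
      deriv (fun t : ℝ => Loss A (U * matExp (t • X))) 0 =
        Matrix.trace (Xᵀ *
          ((∑ n, mcomm (Uᵀ * (A n)ᵀ * U) (lowPart (Uᵀ * A n * U))) -
            (∑ n, mcomm (Uᵀ * (A n)ᵀ * U) (lowPart (Uᵀ * A n * U)))ᵀ)) := by
    intro X hX
    rw [(hasDerivAt_loss' A U X).deriv]
    have htr : ∀ n : Fin N, Uᵀ * (A n)ᵀ * U = (Uᵀ * A n * U)ᵀ := by
      intro n; simp [Matrix.transpose_mul, Matrix.mul_assoc]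
    calc (∑ n, ∑ i : Fin d, ∑ j : Fin d, if (j : ℕ) < (i : ℕ) then
          2 * (Uᵀ * A n * U) i j *
            ((Xᵀ * (Uᵀ * A n * U) + (Uᵀ * A n * U) * X) i j) else 0)
        = ∑ n, Matrix.trace (Xᵀ *
            (mcomm (Uᵀ * A n * U)ᵀ (lowPart (Uᵀ * A n * U)) -
              (mcomm (Uᵀ * A n * U)ᵀ (lowPart (Uᵀ * A n * U)))ᵀ)) :=
          Finset.sum_congr rfl fun n _ => sum_eq_trace' (Uᵀ * A n * U) X hX
      _ = Matrix.trace (Xᵀ *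
            ((∑ n, mcomm (Uᵀ * (A n)ᵀ * U) (lowPart (Uᵀ * A n * U))) -
              (∑ n, mcomm (Uᵀ * (A n)ᵀ * U) (lowPart (Uᵀ * A n * U)))ᵀ)) := by
          simp only [htr, Matrix.mul_sub, Matrix.trace_sub, Matrix.transpose_sum,
            Finset.mul_sum, Matrix.trace_sum, Finset.sum_sub_distrib]
  refine ⟨key, ?_⟩
  set S := ∑ n, mcomm (Uᵀ * (A n)ᵀ * U) (lowPart (Uᵀ * A n * U)) with hSdef
  constructor
  · rintro ⟨-, h⟩
    have hskew : IsSkew (S - Sᵀ) := by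
      simp [IsSkew, Matrix.transpose_sub, Matrix.transpose_transpose, neg_sub]
    have h0 := h (S - Sᵀ) hskew
    rw [key (S - Sᵀ) hskew] at h0
    have : S - Sᵀ = 0 := eq_zero_of_trace' (S - Sᵀ) h0
    exact sub_eq_zero.mp this
  · intro hS
    refine ⟨hU, fun X hXs => ?_⟩
    rw [key X hXs, sub_eq_zero_of_eq hS, Matrix.mul_zero, Matrix.trace_zero]
end
end

section
/- Let M_n = V diag(Λ_{n1},…,Λ_{nd}) V⁻¹, n = 1,…,N, be jointly diagonalizable real d×d matrices with γ = min_{i<i'} Σ_{n=1}^N (Λ_{ni} − Λ_{ni'})² > 0, and let U₀ be an exact joint triangularizer of {M_n}. Then the (d(d−1)/2)×(d(d−1)/2) matrix T = Σ_{n=1}^N t_nᵀ t_n, with t_n = P_low (I ⊗ U₀ᵀ M_nᵀ U₀ − U₀ᵀ M_n U₀ ⊗ I) P_lowᵀ, is invertible, its smallest singular value satisfies σ_min(T) ≥ γ/κ(V)⁴, and ‖T⁻¹‖ ≤ √(d(d−1)/2) · κ(V)⁴/γ. -/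
open Matrix Kronecker BigOperators

noncomputable section

/-- Stationary point of the loss on the orthogonal group: the Riemannian
gradient vanishes, i.e. all directional derivatives along skew directions vanish. -/
def IsStationaryPt {d N : ℕ} (Mh : Fin N → Mat d) (U : Mat d) : Prop :=
  IsOrtho U ∧ ∀ X : Mat d, IsSkew X →
    deriv (fun t : ℝ => Loss Mh (U * matExp (t • X))) 0 = 0

namespace JT
variable {m n p : Type*} [Fintype m] [Fintype n] [Fintype p]

lemma enorm_nonneg (v : m → ℝ) : 0 ≤ euclNorm v := Real.sqrt_nonneg _

lemma enorm_sq (v : m → ℝ) : euclNorm v ^ 2 = ∑ i, (v i) ^ 2 :=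
  Real.sq_sqrt (Finset.sum_nonneg fun i _ => sq_nonneg _)

lemma enorm_eq_zero {v : m → ℝ} : euclNorm v = 0 ↔ v = 0 := by
  constructor
  · intro h
    have h2 : ∑ i, (v i)^2 = 0 := by
      have := enorm_sq v; rw [h] at this; simpa using this.symm
    funext i
    have := (Finset.sum_eq_zero_iff_of_nonneg (fun i _ => sq_nonneg (v i))).1 h2 i (Finset.mem_univ i)
    exact pow_eq_zero_iff (by norm_num) |>.1 this
  · intro h; subst h; simp [euclNorm]

lemma enorm_smul (c : ℝ) (v : m → ℝ) : euclNorm (c • v) = |c| * euclNorm v := by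
  unfold euclNorm
  rw [← Real.sqrt_sq_eq_abs, ← Real.sqrt_mul (sq_nonneg _), Finset.mul_sum]
  congr 1
  exact Finset.sum_congr rfl (fun i _ => by simp only [Pi.smul_apply, smul_eq_mul]; ring)

lemma dot_le_enorm_mul (v w : m → ℝ) : v ⬝ᵥ w ≤ euclNorm v * euclNorm w := by
  unfold dotProduct euclNorm
  rw [← Real.sqrt_mul (Finset.sum_nonneg fun i _ => sq_nonneg _)]
  refine le_trans (le_abs_self _) ?_
  rw [← Real.sqrt_sq_eq_abs]
  exact Real.sqrt_le_sqrt (Finset.sum_mul_sq_le_sq_mul_sq _ _ _)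

lemma enorm_dot_self (v : m → ℝ) : v ⬝ᵥ v = euclNorm v ^ 2 := by
  rw [enorm_sq]; unfold dotProduct; congr 1; funext i; ring

end JT

namespace JT2
open JT
variable {m n p : Type*} [Fintype m] [Fintype n] [Fintype p] [DecidableEq m] [DecidableEq n]

lemma enorm_single (i : m) : euclNorm (Pi.single i (1:ℝ)) = 1 := by
  have h : ∑ j, ((Pi.single i (1:ℝ) : m → ℝ) j) ^ 2 = 1 := by
    rw [Finset.sum_eq_single i]
    · simp
    · intro b _ hb; simp [Pi.single_apply, hb]
    · intro h; exact absurd (Finset.mem_univ i) h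
  unfold euclNorm
  rw [h, Real.sqrt_one]

lemma exists_unit [Nonempty m] : ∃ x : m → ℝ, euclNorm x = 1 := by
  obtain ⟨i⟩ := (inferInstance : Nonempty m)
  exact ⟨Pi.single i 1, enorm_single i⟩

lemma sv_set_nonempty (A : Matrix m n ℝ) [Nonempty n] :
    {r | ∃ x : n → ℝ, euclNorm x = 1 ∧ r = euclNorm (A.mulVec x)}.Nonempty := by
  obtain ⟨x, hx⟩ := exists_unit (m := n)
  exact ⟨euclNorm (A.mulVec x), x, hx, rfl⟩

lemma enorm_mulVec_le_frob (A : Matrix m n ℝ) (x : n → ℝ) :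
    euclNorm (A.mulVec x) ≤ frob A * euclNorm x := by
  unfold euclNorm frob
  rw [← Real.sqrt_mul (Finset.sum_nonneg fun i _ => Finset.sum_nonneg fun j _ => sq_nonneg (A i j))]
  apply Real.sqrt_le_sqrt
  rw [Finset.sum_mul]
  apply Finset.sum_le_sum
  intro i _
  calc (A i ⬝ᵥ x) ^ 2 ≤ (∑ j, A i j ^ 2) * ∑ j, x j ^ 2 :=
        Finset.sum_mul_sq_le_sq_mul_sq _ _ _
    _ = _ := rfl

lemma sv_set_bdd (A : Matrix m n ℝ) :
    BddAbove {r | ∃ x : n → ℝ, euclNorm x = 1 ∧ r = euclNorm (A.mulVec x)} := by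
  refine ⟨frob A, ?_⟩
  rintro r ⟨x, hx, rfl⟩
  simpa [hx] using enorm_mulVec_le_frob A x

lemma sigMax_nonneg (A : Matrix m n ℝ) [Nonempty n] : 0 ≤ sigMax A := by
  obtain ⟨x, hx⟩ := exists_unit (m := n)
  exact le_trans (enorm_nonneg _) (le_csSup (sv_set_bdd A) ⟨x, hx, rfl⟩)

lemma sigMin_nonneg (A : Matrix m n ℝ) : 0 ≤ sigMin A :=
  Real.sInf_nonneg (by rintro r ⟨x, hx, rfl⟩; exact enorm_nonneg _)

lemma enorm_mulVec_le_sigMax (A : Matrix m n ℝ) (x : n → ℝ) [Nonempty n] :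
    euclNorm (A.mulVec x) ≤ sigMax A * euclNorm x := by
  rcases eq_or_ne x 0 with rfl | hx
  · simp [Matrix.mulVec_zero, JT.enorm_eq_zero.2 rfl]
  · have hn : euclNorm x ≠ 0 := fun h => hx (enorm_eq_zero.1 h)
    have hpos : 0 < euclNorm x := lt_of_le_of_ne (enorm_nonneg x) (Ne.symm hn)
    set u : n → ℝ := (euclNorm x)⁻¹ • x with hu
    have hu1 : euclNorm u = 1 := by
      rw [hu, JT.enorm_smul, abs_of_pos (by positivity), inv_mul_cancel₀ hn]
    have hmem : euclNorm (A.mulVec u) ∈ {r | ∃ x : n → ℝ, euclNorm x = 1 ∧ r = euclNorm (A.mulVec x)} :=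
      ⟨u, hu1, rfl⟩
    have h1 : euclNorm (A.mulVec u) ≤ sigMax A := le_csSup (sv_set_bdd A) hmem
    have h2 : A.mulVec u = (euclNorm x)⁻¹ • A.mulVec x := by
      rw [hu, Matrix.mulVec_smul]
    rw [h2, JT.enorm_smul, abs_of_pos (by positivity)] at h1
    calc euclNorm (A.mulVec x) = (euclNorm x)⁻¹ * euclNorm (A.mulVec x) * euclNorm x := by
          field_simp
      _ ≤ sigMax A * euclNorm x := by
          apply mul_le_mul_of_nonneg_right h1 (le_of_lt hpos)

lemma sigMin_mul_enorm_le (A : Matrix m n ℝ) (x : n → ℝ) :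
    sigMin A * euclNorm x ≤ euclNorm (A.mulVec x) := by
  rcases eq_or_ne x 0 with rfl | hx
  · simp [Matrix.mulVec_zero, JT.enorm_eq_zero.2 rfl]
  · have hn : euclNorm x ≠ 0 := fun h => hx (enorm_eq_zero.1 h)
    have hpos : 0 < euclNorm x := lt_of_le_of_ne (enorm_nonneg x) (Ne.symm hn)
    set u : n → ℝ := (euclNorm x)⁻¹ • x with hu
    have hu1 : euclNorm u = 1 := by
      rw [hu, JT.enorm_smul, abs_of_pos (by positivity), inv_mul_cancel₀ hn]
    have h1 : sigMin A ≤ euclNorm (A.mulVec u) :=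
      csInf_le ⟨0, by rintro r ⟨y, hy, rfl⟩; exact enorm_nonneg _⟩ ⟨u, hu1, rfl⟩
    have h2 : A.mulVec u = (euclNorm x)⁻¹ • A.mulVec x := by
      rw [hu, Matrix.mulVec_smul]
    rw [h2, JT.enorm_smul, abs_of_pos (by positivity)] at h1
    calc sigMin A * euclNorm x ≤ (euclNorm x)⁻¹ * euclNorm (A.mulVec x) * euclNorm x :=
          mul_le_mul_of_nonneg_right h1 (le_of_lt hpos)
      _ = euclNorm (A.mulVec x) := by field_simp

lemma sigMax_le (A : Matrix m n ℝ) [Nonempty n] {c : ℝ}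
    (h : ∀ x : n → ℝ, euclNorm x = 1 → euclNorm (A.mulVec x) ≤ c) : sigMax A ≤ c :=
  csSup_le (sv_set_nonempty A) (by rintro r ⟨x, hx, rfl⟩; exact h x hx)

lemma le_sigMin (A : Matrix m n ℝ) [Nonempty n] {c : ℝ}
    (h : ∀ x : n → ℝ, euclNorm x = 1 → c ≤ euclNorm (A.mulVec x)) : c ≤ sigMin A :=
  le_csInf (sv_set_nonempty A) (by rintro r ⟨x, hx, rfl⟩; exact h x hx)

end JT2

namespace JT3
open JT JT2
variable {m n : Type*} [Fintype m] [Fintype n] [DecidableEq m] [DecidableEq n]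

lemma enorm_mulVec_ortho {Q : Matrix m n ℝ} (hQ : Qᵀ * Q = 1) (v : n → ℝ) :
    euclNorm (Q.mulVec v) = euclNorm v := by
  have h : (Q.mulVec v) ⬝ᵥ (Q.mulVec v) = v ⬝ᵥ v := by
    have h1 : (Q *ᵥ v) ᵥ* Q = (Qᵀ * Q) *ᵥ v := by
      rw [← Matrix.mulVec_transpose, Matrix.mulVec_mulVec]
    rw [Matrix.dotProduct_mulVec, h1, hQ, Matrix.one_mulVec]
  have := enorm_dot_self (Q.mulVec v)
  have h2 := enorm_dot_self v
  nlinarith [enorm_nonneg (Q.mulVec v), enorm_nonneg v]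

-- set of singular values unchanged by left-mult by orthogonal
lemma sigMax_ortho_mul {Q : Matrix m m ℝ} (hQ : Qᵀ * Q = 1) (A : Matrix m n ℝ) :
    sigMax (Q * A) = sigMax A := by
  unfold sigMax
  congr 1
  ext r
  constructor
  · rintro ⟨x, hx, rfl⟩
    exact ⟨x, hx, by rw [← Matrix.mulVec_mulVec, enorm_mulVec_ortho hQ]⟩
  · rintro ⟨x, hx, rfl⟩
    exact ⟨x, hx, by rw [← Matrix.mulVec_mulVec, enorm_mulVec_ortho hQ]⟩

lemma sigMin_ortho_mul {Q : Matrix m m ℝ} (hQ : Qᵀ * Q = 1) (A : Matrix m n ℝ) :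
    sigMin (Q * A) = sigMin A := by
  unfold sigMin
  congr 1
  ext r
  constructor
  · rintro ⟨x, hx, rfl⟩
    exact ⟨x, hx, by rw [← Matrix.mulVec_mulVec, enorm_mulVec_ortho hQ]⟩
  · rintro ⟨x, hx, rfl⟩
    exact ⟨x, hx, by rw [← Matrix.mulVec_mulVec, enorm_mulVec_ortho hQ]⟩

lemma sigMax_mul_ortho {Q : Matrix n n ℝ} (hQ : Qᵀ * Q = 1) (hQ' : Q * Qᵀ = 1)
    (A : Matrix m n ℝ) : sigMax (A * Q) = sigMax A := by
  unfold sigMax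
  congr 1
  ext r
  constructor
  · rintro ⟨x, hx, rfl⟩
    refine ⟨Q.mulVec x, by rw [enorm_mulVec_ortho hQ]; exact hx, ?_⟩
    rw [← Matrix.mulVec_mulVec]
  · rintro ⟨x, hx, rfl⟩
    refine ⟨Qᵀ.mulVec x, ?_, ?_⟩
    · rw [enorm_mulVec_ortho (by rw [Matrix.transpose_transpose]; exact hQ')]; exact hx
    · have h2 : (A * Q) *ᵥ (Qᵀ *ᵥ x) = A *ᵥ x := by
        rw [Matrix.mulVec_mulVec, Matrix.mul_assoc, hQ', Matrix.mul_one]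
      rw [h2]

lemma sigMin_mul_ortho {Q : Matrix n n ℝ} (hQ : Qᵀ * Q = 1) (hQ' : Q * Qᵀ = 1)
    (A : Matrix m n ℝ) : sigMin (A * Q) = sigMin A := by
  unfold sigMin
  congr 1
  ext r
  constructor
  · rintro ⟨x, hx, rfl⟩
    refine ⟨Q.mulVec x, by rw [enorm_mulVec_ortho hQ]; exact hx, ?_⟩
    rw [← Matrix.mulVec_mulVec]
  · rintro ⟨x, hx, rfl⟩
    refine ⟨Qᵀ.mulVec x, ?_, ?_⟩
    · rw [enorm_mulVec_ortho (by rw [Matrix.transpose_transpose]; exact hQ')]; exact hx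
    · have h2 : (A * Q) *ᵥ (Qᵀ *ᵥ x) = A *ᵥ x := by
        rw [Matrix.mulVec_mulVec, Matrix.mul_assoc, hQ', Matrix.mul_one]
      rw [h2]

end JT3

namespace JT4
open JT JT2 JT3
variable {m n p : Type*} [Fintype m] [Fintype n] [Fintype p] [DecidableEq m] [DecidableEq n]

lemma sigMax_transpose_le (A : Matrix m n ℝ) [Nonempty m] [Nonempty n] :
    sigMax Aᵀ ≤ sigMax A := by
  apply sigMax_le
  intro y hy
  have h1 : (Aᵀ *ᵥ y) ⬝ᵥ (Aᵀ *ᵥ y) = (A *ᵥ (Aᵀ *ᵥ y)) ⬝ᵥ y := by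
    rw [Matrix.dotProduct_mulVec, Matrix.vecMul_transpose]
  have h2 : euclNorm (Aᵀ *ᵥ y) ^ 2 ≤ sigMax A * euclNorm (Aᵀ *ᵥ y) := by
    rw [← enorm_dot_self, h1]
    calc (A *ᵥ (Aᵀ *ᵥ y)) ⬝ᵥ y ≤ euclNorm (A *ᵥ (Aᵀ *ᵥ y)) * euclNorm y := dot_le_enorm_mul _ _
      _ ≤ (sigMax A * euclNorm (Aᵀ *ᵥ y)) * euclNorm y :=
          mul_le_mul_of_nonneg_right (enorm_mulVec_le_sigMax A _) (enorm_nonneg _)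
      _ = sigMax A * euclNorm (Aᵀ *ᵥ y) := by rw [hy, mul_one]
  rcases eq_or_lt_of_le (enorm_nonneg (Aᵀ *ᵥ y)) with h0 | h0
  · rw [← h0]; exact sigMax_nonneg A
  · nlinarith

lemma sigMax_transpose (A : Matrix m n ℝ) [Nonempty m] [Nonempty n] :
    sigMax Aᵀ = sigMax A := by
  refine le_antisymm (sigMax_transpose_le A) ?_
  have := sigMax_transpose_le Aᵀ
  rwa [Matrix.transpose_transpose] at this

lemma sigMax_pos_of_right_inv {A B : Matrix m m ℝ} [Nonempty m] (hAB : A * B = 1) :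
    0 < sigMax B := by
  obtain ⟨x, hx⟩ := exists_unit (m := m)
  have hABx : A.mulVec (B.mulVec x) = x := by
    rw [Matrix.mulVec_mulVec, hAB, Matrix.one_mulVec]
  have hBx : B.mulVec x ≠ 0 := by
    intro h
    rw [h, Matrix.mulVec_zero] at hABx
    rw [← hABx] at hx
    simp [JT.enorm_eq_zero.2 rfl] at hx
  have h1 : 0 < euclNorm (B.mulVec x) :=
    lt_of_le_of_ne (enorm_nonneg _) (Ne.symm (fun h => hBx (enorm_eq_zero.1 h)))
  have h2 : euclNorm (B.mulVec x) ≤ sigMax B * euclNorm x := enorm_mulVec_le_sigMax B x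
  rw [hx, mul_one] at h2
  linarith

lemma sigMin_ge_inv_sigMax {A B : Matrix m m ℝ} [Nonempty m]
    (hBA : B * A = 1) (hAB : A * B = 1) :
    0 < sigMax B ∧ (sigMax B)⁻¹ ≤ sigMin A := by
  have hBpos : 0 < sigMax B := sigMax_pos_of_right_inv hAB
  refine ⟨hBpos, ?_⟩
  apply le_sigMin
  intro x hx
  have h1 : euclNorm (B.mulVec (A.mulVec x)) = 1 := by
    rw [Matrix.mulVec_mulVec, hBA, Matrix.one_mulVec, hx]
  have h2 : euclNorm (B.mulVec (A.mulVec x)) ≤ sigMax B * euclNorm (A.mulVec x) :=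
    enorm_mulVec_le_sigMax B _
  rw [h1] at h2
  calc (sigMax B)⁻¹ = 1 / sigMax B := (one_div _).symm
    _ ≤ euclNorm (A.mulVec x) := by
        rw [div_le_iff₀ hBpos]; linarith [mul_comm (sigMax B) (euclNorm (A.mulVec x))]

lemma sigMin_pos {A B : Matrix m m ℝ} [Nonempty m]
    (hBA : B * A = 1) (hAB : A * B = 1) : 0 < sigMin A := by
  obtain ⟨h1, h2⟩ := sigMin_ge_inv_sigMax hBA hAB
  exact lt_of_lt_of_le (inv_pos.2 h1) h2

lemma sigMin_eq_inv_sigMax {A B : Matrix m m ℝ} [Nonempty m]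
    (hBA : B * A = 1) (hAB : A * B = 1) : sigMin A = (sigMax B)⁻¹ := by
  obtain ⟨hBpos, hge⟩ := sigMin_ge_inv_sigMax hBA hAB
  refine le_antisymm ?_ hge
  have hApos : 0 < sigMin A := lt_of_lt_of_le (inv_pos.2 hBpos) hge
  have hmaxB : sigMax B ≤ (sigMin A)⁻¹ := by
    apply sigMax_le
    intro y hy
    have h1 : sigMin A * euclNorm (B.mulVec y) ≤ euclNorm (A.mulVec (B.mulVec y)) :=
      sigMin_mul_enorm_le A _
    rw [Matrix.mulVec_mulVec, hAB, Matrix.one_mulVec, hy] at h1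
    calc euclNorm (B.mulVec y) ≤ 1 / sigMin A := by rw [le_div_iff₀ hApos]; linarith
      _ = (sigMin A)⁻¹ := one_div _
  have := inv_anti₀ hBpos hmaxB
  rwa [inv_inv] at this

lemma sigMin_transpose {A B : Matrix m m ℝ} [Nonempty m]
    (hBA : B * A = 1) (hAB : A * B = 1) : sigMin Aᵀ = sigMin A := by
  have hT1 : Bᵀ * Aᵀ = 1 := by rw [← Matrix.transpose_mul, hAB, Matrix.transpose_one]
  have hT2 : Aᵀ * Bᵀ = 1 := by rw [← Matrix.transpose_mul, hBA, Matrix.transpose_one]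
  rw [sigMin_eq_inv_sigMax hT1 hT2, sigMin_eq_inv_sigMax hBA hAB, sigMax_transpose]

end JT4

namespace JT5
open JT JT2 JT3 JT4
variable {m n p : Type*} [Fintype m] [Fintype n] [Fintype p] [DecidableEq m] [DecidableEq n] [DecidableEq p]

lemma sq_le_imp {a b : ℝ} (ha : 0 ≤ a) (hb : 0 ≤ b) (h : a^2 ≤ b^2) : a ≤ b := by nlinarith

lemma frob_nonneg (A : Matrix m n ℝ) : 0 ≤ frob A := Real.sqrt_nonneg _

lemma frob_sq (A : Matrix m n ℝ) : frob A ^ 2 = ∑ i, ∑ j, (A i j) ^ 2 :=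
  Real.sq_sqrt (Finset.sum_nonneg fun i _ => Finset.sum_nonneg fun j _ => sq_nonneg _)

lemma frob_transpose (A : Matrix m n ℝ) : frob Aᵀ = frob A := by
  unfold frob
  rw [Finset.sum_comm]
  rfl

lemma frob_sq_eq_sum_col (A : Matrix m n ℝ) :
    frob A ^ 2 = ∑ j, euclNorm (fun i => A i j) ^ 2 := by
  rw [frob_sq, Finset.sum_comm]
  exact Finset.sum_congr rfl fun j _ => (enorm_sq _).symm

lemma col_mul (A : Matrix m n ℝ) (B : Matrix n p ℝ) (j : p) :
    (fun i => (A * B) i j) = A.mulVec (fun i => B i j) := by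
  funext i
  simp [Matrix.mul_apply, Matrix.mulVec, dotProduct]

lemma frob_mul_ge_left (A : Matrix m n ℝ) (B : Matrix n p ℝ) :
    sigMin A * frob B ≤ frob (A * B) := by
  rcases le_or_gt (sigMin A) 0 with h | h
  · exact le_trans (mul_nonpos_of_nonpos_of_nonneg h (frob_nonneg B)) (frob_nonneg _)
  apply sq_le_imp (mul_nonneg (le_of_lt h) (frob_nonneg B)) (frob_nonneg _)
  rw [mul_pow, frob_sq_eq_sum_col, frob_sq_eq_sum_col, Finset.mul_sum]
  apply Finset.sum_le_sum
  intro j _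
  rw [col_mul]
  have h1 : sigMin A * euclNorm (fun i => B i j) ≤ euclNorm (A.mulVec fun i => B i j) :=
    sigMin_mul_enorm_le A _
  have h2 : 0 ≤ sigMin A * euclNorm (fun i => B i j) :=
    mul_nonneg (le_of_lt h) (enorm_nonneg _)
  calc sigMin A ^ 2 * euclNorm (fun i => B i j) ^ 2
      = (sigMin A * euclNorm (fun i => B i j)) ^ 2 := by ring
    _ ≤ euclNorm (A.mulVec fun i => B i j) ^ 2 := by nlinarith [enorm_nonneg (A.mulVec fun i => B i j)]

lemma frob_mul_ge_right (A : Matrix m n ℝ) (B : Matrix n p ℝ) :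
    sigMin Bᵀ * frob A ≤ frob (A * B) := by
  have := frob_mul_ge_left Bᵀ Aᵀ
  rwa [← Matrix.transpose_mul, frob_transpose, frob_transpose] at this

lemma frob_le_sqrt_card_mul_sigMax (A : Matrix m n ℝ) [Nonempty n] :
    frob A ≤ Real.sqrt (Fintype.card n) * sigMax A := by
  apply sq_le_imp (frob_nonneg A)
    (mul_nonneg (Real.sqrt_nonneg _) (sigMax_nonneg A))
  rw [mul_pow, Real.sq_sqrt (by positivity), frob_sq_eq_sum_col]
  calc ∑ j, euclNorm (fun i => A i j) ^ 2 ≤ ∑ _j : n, sigMax A ^ 2 := by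
        apply Finset.sum_le_sum
        intro j _
        have hcol : (fun i => A i j) = A.mulVec (Pi.single j 1) := by
          funext i
          simp [Matrix.mulVec, dotProduct, Pi.single_apply]
        rw [hcol]
        have h1 : euclNorm (A.mulVec (Pi.single j 1)) ≤ sigMax A * euclNorm (Pi.single j (1:ℝ)) :=
          enorm_mulVec_le_sigMax A _
        rw [enorm_single, mul_one] at h1
        nlinarith [enorm_nonneg (A.mulVec (Pi.single j 1)), sigMax_nonneg A]
    _ = (Fintype.card n : ℝ) * sigMax A ^ 2 := by
        rw [Finset.sum_const, Finset.card_univ, nsmul_eq_mul]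

end JT5

namespace JT6
open JT JT2 JT3 JT4 JT5

def UpperTri {d : ℕ} (A : Matrix (Fin d) (Fin d) ℝ) : Prop :=
  ∀ i j : Fin d, (j : ℕ) < (i : ℕ) → A i j = 0

lemma exists_perm {d N : ℕ} (A : Fin N → Matrix (Fin d) (Fin d) ℝ)
    (hA : ∀ n, UpperTri (A n)) (B : Matrix (Fin d) (Fin d) ℝ)
    (C : Matrix (Fin d) (Fin d) ℝ) (hCB : C * B = 1)
    (Λ : Fin N → Fin d → ℝ)
    (hcomm : ∀ n, A n * B = B * Matrix.diagonal (Λ n))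
    (hgap : ∀ i j : Fin d, i ≠ j → ∃ n, Λ n i ≠ Λ n j) :
    ∃ σ : Equiv.Perm (Fin d), ∀ i j : Fin d, (j : ℕ) < (i : ℕ) → B i (σ j) = 0 := by
  -- each column of B is nonzero
  have hcol : ∀ c : Fin d, ∃ i, B i c ≠ 0 := by
    intro c
    by_contra h
    push_neg at h
    have h1 : (C * B) c c = 0 := by
      rw [Matrix.mul_apply]
      exact Finset.sum_eq_zero fun k _ => by rw [h k, mul_zero]
    rw [hCB, Matrix.one_apply_eq] at h1
    exact one_ne_zero h1
  -- the "height" function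
  have hS : ∀ c : Fin d, (Finset.univ.filter (fun i => B i c ≠ 0)).Nonempty := by
    intro c
    obtain ⟨i, hi⟩ := hcol c
    exact ⟨i, Finset.mem_filter.2 ⟨Finset.mem_univ i, hi⟩⟩
  set h : Fin d → Fin d := fun c => (Finset.univ.filter (fun i => B i c ≠ 0)).max' (hS c) with hh
  have hne : ∀ c, B (h c) c ≠ 0 := by
    intro c
    have := Finset.max'_mem _ (hS c)
    exact (Finset.mem_filter.1 this).2
  have hzero : ∀ c : Fin d, ∀ i : Fin d, (h c : ℕ) < (i : ℕ) → B i c = 0 := by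
    intro c i hi
    by_contra hB0
    have hmem : i ∈ Finset.univ.filter (fun i => B i c ≠ 0) :=
      Finset.mem_filter.2 ⟨Finset.mem_univ i, hB0⟩
    have := Finset.le_max' _ i hmem
    have : (i : ℕ) ≤ (h c : ℕ) := this
    omega
  -- eigenvalue identification
  have heig : ∀ n c, Λ n c = A n (h c) (h c) := by
    intro n c
    have h1 : (A n * B) (h c) c = (B * Matrix.diagonal (Λ n)) (h c) c := by rw [hcomm n]
    rw [Matrix.mul_apply, Matrix.mul_diagonal] at h1
    have h2 : ∑ k, A n (h c) k * B k c = A n (h c) (h c) * B (h c) c := by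
      apply Finset.sum_eq_single
      · intro k _ hk
        rcases lt_trichotomy (k : ℕ) ((h c : ℕ)) with hlt | heq | hgt
        · rw [hA n (h c) k hlt, zero_mul]
        · exact absurd (Fin.ext heq) hk
        · rw [hzero c k hgt, mul_zero]
      · intro hk; exact absurd (Finset.mem_univ _) hk
    rw [h2] at h1
    have h3 : Λ n c * B (h c) c = A n (h c) (h c) * B (h c) c := by
      rw [mul_comm (Λ n c)]; exact h1.symm
    exact mul_right_cancel₀ (hne c) h3
  -- injectivity
  have hinj : Function.Injective h := by
    intro c c' hcc
    by_contra hne'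
    obtain ⟨n, hn⟩ := hgap c c' hne'
    apply hn
    rw [heig n c, heig n c', hcc]
  have hbij : Function.Bijective h := Finite.injective_iff_bijective.1 hinj
  refine ⟨(Equiv.ofBijective h hbij).symm, ?_⟩
  intro i j hij
  have hj : h ((Equiv.ofBijective h hbij).symm j) = j := by
    exact Equiv.ofBijective_apply_symm_apply h hbij j
  apply hzero
  rw [hj]
  exact hij

end JT6

namespace JT7
open JT JT2 JT3 JT4 JT5 JT6

def LowerTri {d : ℕ} (P : Matrix (Fin d) (Fin d) ℝ) : Prop :=
  ∀ i j : Fin d, (i : ℕ) < (j : ℕ) → P i j = 0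

def StrictLower {d : ℕ} (X : Matrix (Fin d) (Fin d) ℝ) : Prop :=
  ∀ i j : Fin d, (i : ℕ) ≤ (j : ℕ) → X i j = 0

lemma diag_LXLi_zero {d : ℕ} {L Li X : Matrix (Fin d) (Fin d) ℝ}
    (hL : LowerTri L) (hLi : LowerTri Li) (hX : StrictLower X) (i : Fin d) :
    (L * X * Li) i i = 0 := by
  rw [Matrix.mul_apply]
  apply Finset.sum_eq_zero
  intro b _
  rcases lt_or_ge (b : ℕ) (i : ℕ) with hb | hb
  · rw [hLi b i hb, mul_zero]
  · have h1 : (L * X) i b = 0 := by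
      rw [Matrix.mul_apply]
      apply Finset.sum_eq_zero
      intro a _
      rcases le_or_gt (a : ℕ) (i : ℕ) with ha | ha
      · rw [hX a b (le_trans ha hb), mul_zero]
      · rw [hL i a ha, zero_mul]
    rw [h1, zero_mul]

lemma conj_identity {d : ℕ} (L Li D X : Matrix (Fin d) (Fin d) ℝ) (hLiL : Li * L = 1) :
    Li * (D * (L * X * Li) - (L * X * Li) * D) * L
      = (Li * D * L) * X - X * (Li * D * L) := by
  have h1 : Li * (D * (L * X * Li)) * L = Li * D * L * X * (Li * L) := by
    simp only [Matrix.mul_assoc]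
  have h2 : Li * ((L * X * Li) * D) * L = (Li * L) * (X * (Li * D * L)) := by
    simp only [Matrix.mul_assoc]
  rw [Matrix.mul_sub, Matrix.sub_mul, h1, h2, hLiL, Matrix.mul_one, Matrix.one_mul]

lemma core_estimate {d N : ℕ} (L Li : Matrix (Fin d) (Fin d) ℝ)
    (hLiL : Li * L = 1)
    (hL : LowerTri L) (hLi : LowerTri Li)
    (Λ' : Fin N → Fin d → ℝ) (γ : ℝ) (hγ0 : 0 ≤ γ)
    (hgapγ : ∀ i j : Fin d, i ≠ j → γ ≤ ∑ n, (Λ' n i - Λ' n j) ^ 2)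
    (X : Matrix (Fin d) (Fin d) ℝ) (hX : StrictLower X) :
    γ * (sigMin Li * sigMin Lᵀ * sigMin L * sigMin Liᵀ) ^ 2 * frob X ^ 2 ≤
      ∑ n, frob ((Li * Matrix.diagonal (Λ' n) * L) * X
                  - X * (Li * Matrix.diagonal (Λ' n) * L)) ^ 2 := by
  set Y := L * X * Li with hY
  set Z : Fin N → Matrix (Fin d) (Fin d) ℝ :=
    fun n => Matrix.diagonal (Λ' n) * Y - Y * Matrix.diagonal (Λ' n) with hZ
  have hZentry : ∀ n i j, Z n i j = (Λ' n i - Λ' n j) * Y i j := by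
    intro n i j
    rw [hZ]
    simp [Matrix.sub_apply, Matrix.diagonal_mul, Matrix.mul_diagonal]
    ring
  have hYdiag : ∀ i, Y i i = 0 := fun i => diag_LXLi_zero hL hLi hX i
  set s1 := sigMin Li with hs1
  set s2 := sigMin Lᵀ with hs2
  set s3 := sigMin L with hs3
  set s4 := sigMin Liᵀ with hs4
  have hs1n : 0 ≤ s1 := sigMin_nonneg _
  have hs2n : 0 ≤ s2 := sigMin_nonneg _
  have hs3n : 0 ≤ s3 := sigMin_nonneg _
  have hs4n : 0 ≤ s4 := sigMin_nonneg _
  -- step A: each term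
  have hA : ∀ n, (s1 * s2) ^ 2 * frob (Z n) ^ 2 ≤
      frob ((Li * Matrix.diagonal (Λ' n) * L) * X
            - X * (Li * Matrix.diagonal (Λ' n) * L)) ^ 2 := by
    intro n
    have hid : (Li * Matrix.diagonal (Λ' n) * L) * X
        - X * (Li * Matrix.diagonal (Λ' n) * L) = Li * Z n * L := by
      rw [hZ, hY]
      exact (conj_identity L Li (Matrix.diagonal (Λ' n)) X hLiL).symm
    rw [hid]
    have h1 : s2 * frob (Z n) ≤ frob (Z n * L) := frob_mul_ge_right _ _
    have h2 : s1 * frob (Z n * L) ≤ frob (Li * (Z n * L)) := frob_mul_ge_left _ _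
    have h3 : s1 * (s2 * frob (Z n)) ≤ frob (Li * (Z n * L)) :=
      le_trans (mul_le_mul_of_nonneg_left h1 hs1n) h2
    have h4 : Li * (Z n * L) = Li * Z n * L := by rw [Matrix.mul_assoc]
    rw [h4] at h3
    have h5 : 0 ≤ s1 * (s2 * frob (Z n)) :=
      mul_nonneg hs1n (mul_nonneg hs2n (frob_nonneg _))
    calc (s1 * s2) ^ 2 * frob (Z n) ^ 2 = (s1 * (s2 * frob (Z n))) ^ 2 := by ring
      _ ≤ frob (Li * Z n * L) ^ 2 := pow_le_pow_left₀ h5 h3 2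
  -- step B: sum of Z norms
  have hB : γ * frob Y ^ 2 ≤ ∑ n, frob (Z n) ^ 2 := by
    have hswap : ∑ n, frob (Z n) ^ 2 = ∑ i, ∑ j, (∑ n, (Λ' n i - Λ' n j) ^ 2) * Y i j ^ 2 := by
      rw [Finset.sum_congr rfl (fun n _ => frob_sq (Z n))]
      rw [Finset.sum_comm]
      apply Finset.sum_congr rfl
      intro i _
      rw [Finset.sum_comm]
      apply Finset.sum_congr rfl
      intro j _
      rw [Finset.sum_mul]
      apply Finset.sum_congr rfl
      intro n _
      rw [hZentry n i j]
      ring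
    rw [hswap, frob_sq, Finset.mul_sum]
    apply Finset.sum_le_sum
    intro i _
    rw [Finset.mul_sum]
    apply Finset.sum_le_sum
    intro j _
    rcases eq_or_ne i j with rfl | hij
    · rw [hYdiag i]
      simp
    · exact mul_le_mul_of_nonneg_right (hgapγ i j hij) (sq_nonneg _)
  -- step C: frob Y lower bound
  have hC : s3 * (s4 * frob X) ≤ frob Y := by
    have h1 : s4 * frob X ≤ frob (X * Li) := frob_mul_ge_right _ _
    have h2 : s3 * frob (X * Li) ≤ frob (L * (X * Li)) := frob_mul_ge_left _ _
    have h3 := le_trans (mul_le_mul_of_nonneg_left h1 hs3n) h2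
    rwa [← Matrix.mul_assoc] at h3
  -- combine
  have hCsq : (s3 * (s4 * frob X)) ^ 2 ≤ frob Y ^ 2 :=
    pow_le_pow_left₀ (mul_nonneg hs3n (mul_nonneg hs4n (frob_nonneg _))) hC 2
  calc γ * (s1 * s2 * s3 * s4) ^ 2 * frob X ^ 2
      = (s1 * s2) ^ 2 * (γ * (s3 * (s4 * frob X)) ^ 2) := by ring
    _ ≤ (s1 * s2) ^ 2 * (γ * frob Y ^ 2) := by
        apply mul_le_mul_of_nonneg_left _ (sq_nonneg _)
        exact mul_le_mul_of_nonneg_left hCsq hγ0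
    _ ≤ (s1 * s2) ^ 2 * ∑ n, frob (Z n) ^ 2 := by
        apply mul_le_mul_of_nonneg_left hB (sq_nonneg _)
    _ = ∑ n, (s1 * s2) ^ 2 * frob (Z n) ^ 2 := Finset.mul_sum _ _ _
    _ ≤ _ := Finset.sum_le_sum fun n _ => hA n

end JT7

namespace JT8
open JT JT2 JT3 JT4 JT5 JT6 JT7

lemma vecM_matM {d : ℕ} (v : Fin d × Fin d → ℝ) : vecM (matM v) = v := by
  funext p
  simp [vecM, matM]

lemma enorm_vecM {d : ℕ} (X : Mat d) : euclNorm (vecM X) = frob X := by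
  unfold euclNorm frob vecM
  congr 1
  rw [Fintype.sum_prod_type, Finset.sum_comm]

lemma kron_mulVec {d : ℕ} (A X : Mat d) :
    ((1 : Mat d) ⊗ₖ Aᵀ - A ⊗ₖ (1 : Mat d)).mulVec (vecM X) = vecM (Aᵀ * X - X * Aᵀ) := by
  funext p
  obtain ⟨c, r⟩ := p
  simp only [Matrix.mulVec, dotProduct, Matrix.sub_apply, Matrix.kroneckerMap_apply]
  rw [Fintype.sum_prod_type]
  simp only [sub_mul, Finset.sum_sub_distrib]
  have h1 : ∑ c' , ∑ r', (1 : Mat d) c c' * Aᵀ r r' * vecM X (c', r') = (Aᵀ * X) r c := by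
    rw [Finset.sum_comm]
    rw [show (Aᵀ * X) r c = ∑ r', Aᵀ r r' * X r' c from Matrix.mul_apply]
    apply Finset.sum_congr rfl
    intro r' _
    rw [Finset.sum_eq_single c]
    · simp [vecM]
    · intro b _ hb
      simp [Matrix.one_apply, Ne.symm hb]
    · intro hc; exact absurd (Finset.mem_univ _) hc
  have h2 : ∑ c', ∑ r', A c c' * (1 : Mat d) r r' * vecM X (c', r') = (X * Aᵀ) r c := by
    rw [show (X * Aᵀ) r c = ∑ c', X r c' * Aᵀ c' c from Matrix.mul_apply]
    apply Finset.sum_congr rfl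
    intro c' _
    rw [Finset.sum_eq_single r]
    · simp [vecM, Matrix.transpose_apply]
      ring
    · intro b _ hb
      simp [Matrix.one_apply, Ne.symm hb]
    · intro hc; exact absurd (Finset.mem_univ _) hc
  rw [h1, h2]
  rfl

lemma lowOp_mulVec {d : ℕ} (v : Fin d × Fin d → ℝ) (p : Fin d × Fin d) :
    (lowOp d).mulVec v p = (if (p.1 : ℕ) < (p.2 : ℕ) then 1 else 0) * v p := by
  unfold lowOp
  rw [Matrix.mulVec_diagonal]

lemma strictLower_of_lowOp_fixed {d : ℕ} {v : Fin d × Fin d → ℝ}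
    (hv : (lowOp d).mulVec v = v) : StrictLower (matM v) := by
  intro i j hij
  have h := congr_fun hv (j, i)
  rw [lowOp_mulVec] at h
  simp only at h
  rw [if_neg (by omega)] at h
  rw [zero_mul] at h
  show v (j, i) = 0
  exact h.symm

lemma lowOp_fixed_of_strictLower {d : ℕ} {X : Mat d} (hX : StrictLower X) :
    (lowOp d).mulVec (vecM X) = vecM X := by
  funext p
  rw [lowOp_mulVec]
  by_cases h : (p.1 : ℕ) < (p.2 : ℕ)
  · rw [if_pos h, one_mul]
  · rw [if_neg h, zero_mul]
    have : X p.2 p.1 = 0 := hX p.2 p.1 (by omega)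
    show (0:ℝ) = vecM X p
    rw [show vecM X p = X p.2 p.1 from rfl, this]

lemma enorm_P_mulVec {d k : ℕ} {P : Matrix (Fin k) (Fin d × Fin d) ℝ} (hP : IsPlow P)
    (w : Fin d × Fin d → ℝ) (hw : (lowOp d).mulVec w = w) :
    euclNorm (P.mulVec w) = euclNorm w := by
  have h : (P.mulVec w) ⬝ᵥ (P.mulVec w) = w ⬝ᵥ w := by
    have h1 : (P *ᵥ w) ᵥ* P = (Pᵀ * P) *ᵥ w := by
      rw [← Matrix.mulVec_transpose, Matrix.mulVec_mulVec]
    rw [Matrix.dotProduct_mulVec, h1, hP.2, hw]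
  have e1 := JT.enorm_dot_self (P.mulVec w)
  have e2 := JT.enorm_dot_self w
  nlinarith [JT.enorm_nonneg (P.mulVec w), JT.enorm_nonneg w]

lemma enorm_Pt_mulVec {d k : ℕ} {P : Matrix (Fin k) (Fin d × Fin d) ℝ} (hP : IsPlow P)
    (x : Fin k → ℝ) : euclNorm (Pᵀ.mulVec x) = euclNorm x := by
  exact JT3.enorm_mulVec_ortho (by rw [Matrix.transpose_transpose]; exact hP.1) x

lemma lowOp_fix_Pt {d k : ℕ} {P : Matrix (Fin k) (Fin d × Fin d) ℝ} (hP : IsPlow P)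
    (x : Fin k → ℝ) : (lowOp d).mulVec (Pᵀ.mulVec x) = Pᵀ.mulVec x := by
  rw [Matrix.mulVec_mulVec, ← hP.2, Matrix.mul_assoc, hP.1, Matrix.mul_one]

lemma strictLower_comm {d : ℕ} {B X : Mat d} (hB : LowerTri B) (hX : StrictLower X) :
    StrictLower (B * X - X * B) := by
  intro i j hij
  rw [Matrix.sub_apply, Matrix.mul_apply, Matrix.mul_apply]
  have h1 : ∑ k, B i k * X k j = 0 := by
    apply Finset.sum_eq_zero
    intro a _
    rcases le_or_gt (a : ℕ) (i : ℕ) with ha | ha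
    · rw [hX a j (le_trans ha hij), mul_zero]
    · rw [hB i a ha, zero_mul]
  have h2 : ∑ k, X i k * B k j = 0 := by
    apply Finset.sum_eq_zero
    intro a _
    rcases lt_or_ge (a : ℕ) (j : ℕ) with ha | ha
    · rw [hB a j ha, mul_zero]
    · rw [hX i a (le_trans hij ha), zero_mul]
  rw [h1, h2, sub_zero]

/-- The key identity: for upper triangular `A` and `X = matM (Pᵀ x)`,
`‖(ttil P A) x‖ = ‖Aᵀ X − X Aᵀ‖_F`. -/
lemma ttil_mulVec_enorm {d k : ℕ} {P : Matrix (Fin k) (Fin d × Fin d) ℝ} (hP : IsPlow P)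
    {A : Mat d} (hA : UpperTri A) (x : Fin k → ℝ) :
    euclNorm ((ttil P A).mulVec x)
      = frob (Aᵀ * matM (Pᵀ.mulVec x) - matM (Pᵀ.mulVec x) * Aᵀ) := by
  set X := matM (Pᵀ.mulVec x) with hXdef
  have hvec : vecM X = Pᵀ.mulVec x := vecM_matM _
  have hXlow : StrictLower X := strictLower_of_lowOp_fixed (lowOp_fix_Pt hP x)
  have hAt : LowerTri Aᵀ := fun i j hij => hA j i hij
  have hC : StrictLower (Aᵀ * X - X * Aᵀ) := strictLower_comm hAt hXlow
  have h1 : (ttil P A).mulVec x = P.mulVec (vecM (Aᵀ * X - X * Aᵀ)) := by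
    unfold ttil
    rw [← Matrix.mulVec_mulVec, ← Matrix.mulVec_mulVec, ← hvec, kron_mulVec]
  rw [h1, enorm_P_mulVec hP _ (lowOp_fixed_of_strictLower hC), enorm_vecM]

end JT8

namespace JT9
open JT JT2 JT3 JT4 JT5 JT6 JT7 JT8

def permM {d : ℕ} (σ : Equiv.Perm (Fin d)) : Mat d :=
  Matrix.of fun i j => if i = σ j then 1 else 0

lemma permM_apply {d : ℕ} (σ : Equiv.Perm (Fin d)) (i j : Fin d) :
    permM σ i j = if i = σ j then 1 else 0 := rfl

lemma permM_transpose {d : ℕ} (σ : Equiv.Perm (Fin d)) : (permM σ)ᵀ = permM σ⁻¹ := by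
  ext i j
  rw [Matrix.transpose_apply, permM_apply, permM_apply]
  by_cases h : j = σ i
  · rw [if_pos h, if_pos (by rw [h]; simp)]
  · rw [if_neg h, if_neg (fun hc => h (by rw [hc]; simp))]

lemma permM_orth1 {d : ℕ} (σ : Equiv.Perm (Fin d)) : (permM σ)ᵀ * permM σ = 1 := by
  ext i j
  rw [Matrix.mul_apply, Matrix.one_apply]
  simp only [Matrix.transpose_apply, permM_apply]
  rw [Finset.sum_congr rfl (fun k _ => show (if k = σ i then (1:ℝ) else 0) *
      (if k = σ j then 1 else 0) = if k = σ i then (if k = σ j then (1:ℝ) else 0) else 0 from by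
    split_ifs <;> simp)]
  rw [Finset.sum_ite_eq' Finset.univ (σ i)
    (fun k => if k = σ j then (1:ℝ) else 0), if_pos (Finset.mem_univ _)]
  exact if_congr (by constructor <;> intro h <;> [exact σ.injective h; rw [h]]) rfl rfl

lemma permM_orth2 {d : ℕ} (σ : Equiv.Perm (Fin d)) : permM σ * (permM σ)ᵀ = 1 := by
  have h1 : permM σ = (permM σ⁻¹)ᵀ := by rw [permM_transpose, inv_inv]
  rw [permM_transpose, h1]
  exact permM_orth1 σ⁻¹

lemma mul_permM_apply {d : ℕ} (B : Mat d) (σ : Equiv.Perm (Fin d)) (i j : Fin d) :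
    (B * permM σ) i j = B i (σ j) := by
  rw [Matrix.mul_apply]
  rw [Finset.sum_eq_single (σ j)]
  · rw [permM_apply, if_pos rfl, mul_one]
  · intro b _ hb
    rw [permM_apply, if_neg hb, mul_zero]
  · intro hc; exact absurd (Finset.mem_univ _) hc

lemma diag_permM {d : ℕ} (f : Fin d → ℝ) (σ : Equiv.Perm (Fin d)) :
    Matrix.diagonal f * permM σ = permM σ * Matrix.diagonal (fun j => f (σ j)) := by
  ext i j
  rw [Matrix.diagonal_mul, Matrix.mul_diagonal]
  show (f i * if i = σ j then (1:ℝ) else 0) = (if i = σ j then (1:ℝ) else 0) * f (σ j)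
  by_cases h : i = σ j
  · rw [if_pos h, h, mul_one, one_mul]
  · rw [if_neg h, mul_zero, zero_mul]

lemma gapMin_le {d N : ℕ} (Λ : Fin N → Fin d → ℝ) (i j : Fin d) (hij : i ≠ j) :
    gapMin Λ ≤ ∑ n, (Λ n i - Λ n j) ^ 2 := by
  have hbdd : BddBelow {r | ∃ i i' : Fin d, i < i' ∧ r = ∑ n, (Λ n i - Λ n i') ^ 2} := by
    refine ⟨0, ?_⟩
    rintro r ⟨a, b, _, rfl⟩
    exact Finset.sum_nonneg fun n _ => sq_nonneg _
  rcases lt_or_gt_of_ne hij with h | h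
  · exact csInf_le hbdd ⟨i, j, h, rfl⟩
  · have : ∑ n, (Λ n i - Λ n j) ^ 2 = ∑ n, (Λ n j - Λ n i) ^ 2 :=
      Finset.sum_congr rfl fun n _ => by ring
    rw [this]
    exact csInf_le hbdd ⟨j, i, h, rfl⟩

lemma gapMin_d_ge_two {d N : ℕ} (Λ : Fin N → Fin d → ℝ) (hγ : 0 < gapMin Λ) : 2 ≤ d := by
  by_contra h
  push_neg at h
  have hempty : {r | ∃ i i' : Fin d, i < i' ∧ r = ∑ n, (Λ n i - Λ n i') ^ 2} = ∅ := by
    ext r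
    simp only [Set.mem_setOf_eq, Set.mem_empty_iff_false, iff_false]
    rintro ⟨a, b, hab, _⟩
    have h1 := a.2
    have h2 := b.2
    have h3 : (a : ℕ) < (b : ℕ) := hab
    omega
  unfold gapMin at hγ
  rw [hempty, Real.sInf_empty] at hγ
  exact lt_irrefl 0 hγ

lemma sum_mulVec' {ι : Type*} (s : Finset ι) {m n : Type*} [Fintype m] [Fintype n]
    (T : ι → Matrix m n ℝ) (x : n → ℝ) :
    (∑ i ∈ s, T i).mulVec x = ∑ i ∈ s, (T i).mulVec x := by
  funext r
  simp only [Matrix.mulVec, dotProduct, Finset.sum_apply, Matrix.sum_apply, Finset.sum_mul]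
  rw [Finset.sum_comm]

lemma dot_sum {ι : Type*} (s : Finset ι) {m : Type*} [Fintype m]
    (v : m → ℝ) (w : ι → m → ℝ) : v ⬝ᵥ (∑ i ∈ s, w i) = ∑ i ∈ s, v ⬝ᵥ w i := by
  simp only [dotProduct, Finset.sum_apply, Finset.mul_sum]
  rw [Finset.sum_comm]

lemma rayleigh {m l : Type*} [Fintype m] [Fintype l] {ι : Type*} (s : Finset ι)
    (t : ι → Matrix l m ℝ) (x : m → ℝ) :
    x ⬝ᵥ ((∑ i ∈ s, (t i)ᵀ * t i).mulVec x) = ∑ i ∈ s, euclNorm ((t i).mulVec x) ^ 2 := by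
  rw [sum_mulVec', dot_sum]
  apply Finset.sum_congr rfl
  intro i _
  rw [← Matrix.mulVec_mulVec, Matrix.dotProduct_mulVec, Matrix.vecMul_transpose,
    JT.enorm_dot_self]

end JT9

-- STATEMENT 11
open JT JT2 JT3 JT4 JT5 JT6 JT7 JT8 JT9 in
/-- the operator `T = Σₙ tₙᵀ tₙ` is invertible, with
`σ_min(T) ≥ γ/κ(V)⁴` and `‖T⁻¹‖ ≤ √(d(d−1)/2)·κ(V)⁴/γ`. -/
theorem ttil_operator_invertible {d N k : ℕ} (hk : 2 * k = d * (d - 1))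
    (V : Mat d) (hV : IsUnit V)
    (Λ : Fin N → Fin d → ℝ) (M : Fin N → Mat d)
    (hM : ∀ n, M n = V * Matrix.diagonal (Λ n) * V⁻¹)
    (hγ : 0 < gapMin Λ)
    (U₀ : Mat d) (hU₀ : ExactTriang U₀ M)
    (P : Matrix (Fin k) (Fin d × Fin d) ℝ) (hP : IsPlow P) :
    IsUnit (∑ n, (ttil P (U₀ᵀ * M n * U₀))ᵀ * ttil P (U₀ᵀ * M n * U₀)) ∧
    gapMin Λ / condNum V ^ 4 ≤
      sigMin (∑ n, (ttil P (U₀ᵀ * M n * U₀))ᵀ * ttil P (U₀ᵀ * M n * U₀)) ∧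
    frob (∑ n, (ttil P (U₀ᵀ * M n * U₀))ᵀ * ttil P (U₀ᵀ * M n * U₀))⁻¹ ≤
      Real.sqrt ((d : ℝ) * ((d : ℝ) - 1) / 2) * condNum V ^ 4 / gapMin Λ := by
  classical
  obtain ⟨hU₀o, hlow⟩ := hU₀
  have hd2 : 2 ≤ d := gapMin_d_ge_two Λ hγ
  have hk1 : 1 ≤ k := by
    have h2 : 2 * 1 ≤ d * (d - 1) := by
      have := Nat.mul_le_mul hd2 (show 1 ≤ d - 1 by omega)
      omega
    omega
  haveI : Nonempty (Fin d) := ⟨⟨0, by omega⟩⟩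
  haveI : Nonempty (Fin k) := ⟨⟨0, by omega⟩⟩
  have hU₀' : U₀ * U₀ᵀ = 1 := mul_eq_one_comm.1 hU₀o
  have hVdet : IsUnit V.det := (Matrix.isUnit_iff_isUnit_det V).1 hV
  have hViV : V⁻¹ * V = 1 := Matrix.nonsing_inv_mul V hVdet
  have hVVi : V * V⁻¹ = 1 := Matrix.mul_nonsing_inv V hVdet
  set B := U₀ᵀ * V with hBdef
  set Bi := V⁻¹ * U₀ with hBidef
  have hBiB : Bi * B = 1 := by
    have h1 : Bi * B = V⁻¹ * (U₀ * (U₀ᵀ * V)) := by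
      rw [hBidef, hBdef]; simp only [Matrix.mul_assoc]
    rw [h1, ← Matrix.mul_assoc U₀ U₀ᵀ V, hU₀', Matrix.one_mul, hViV]
  have hBBi : B * Bi = 1 := by
    have h1 : B * Bi = U₀ᵀ * (V * (V⁻¹ * U₀)) := by
      rw [hBidef, hBdef]; simp only [Matrix.mul_assoc]
    rw [h1, ← Matrix.mul_assoc V V⁻¹ U₀, hVVi, Matrix.one_mul, hU₀o]
  -- upper triangularity of the conjugated family
  have hAupper : ∀ n, UpperTri (U₀ᵀ * M n * U₀) := by
    intro n i j hij
    have h := congr_fun (congr_fun (hlow n) i) j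
    simp only [lowPart, Matrix.of_apply, Matrix.zero_apply, if_pos hij] at h
    exact h
  have hcomm : ∀ n, (U₀ᵀ * M n * U₀) * B = B * Matrix.diagonal (Λ n) := by
    intro n
    rw [hM n, hBdef]
    have hstep : U₀ * (U₀ᵀ * V) = V := by rw [← Matrix.mul_assoc, hU₀', Matrix.one_mul]
    calc (U₀ᵀ * (V * Matrix.diagonal (Λ n) * V⁻¹) * U₀) * (U₀ᵀ * V)
        = U₀ᵀ * (V * (Matrix.diagonal (Λ n) * (V⁻¹ * (U₀ * (U₀ᵀ * V))))) := by
          simp only [Matrix.mul_assoc]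
      _ = U₀ᵀ * (V * Matrix.diagonal (Λ n)) := by rw [hstep, hViV, Matrix.mul_one]
      _ = (U₀ᵀ * V) * Matrix.diagonal (Λ n) := by rw [Matrix.mul_assoc]
  have hγ0 : 0 ≤ gapMin Λ := le_of_lt hγ
  have hgapNe : ∀ i j : Fin d, i ≠ j → ∃ n, Λ n i ≠ Λ n j := by
    intro i j hij
    by_contra h
    push_neg at h
    have hz : ∑ n, (Λ n i - Λ n j) ^ 2 = 0 :=
      Finset.sum_eq_zero fun n _ => by rw [h n]; ring
    have := gapMin_le Λ i j hij
    linarith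
  obtain ⟨σ, hσ⟩ := exists_perm _ hAupper B Bi hBiB Λ hcomm hgapNe
  set Pm := permM σ with hPmdef
  set W := B * Pm with hWdef
  set Wi := Pmᵀ * Bi with hWidef
  have hWiW : Wi * W = 1 := by
    have h1 : Wi * W = Pmᵀ * ((Bi * B) * Pm) := by
      rw [hWidef, hWdef]; simp only [Matrix.mul_assoc]
    rw [h1, hBiB, Matrix.one_mul, hPmdef, permM_orth1]
  have hWWi : W * Wi = 1 := by
    have h1 : W * Wi = B * ((Pm * Pmᵀ) * Bi) := by
      rw [hWidef, hWdef]; simp only [Matrix.mul_assoc]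
    rw [h1, hPmdef, permM_orth2, Matrix.one_mul, hBBi]
  have hWupper : UpperTri W := by
    intro i j hij
    rw [hWdef, hPmdef, mul_permM_apply]
    exact hσ i j hij
  have hAW : ∀ n, (U₀ᵀ * M n * U₀) * W = W * Matrix.diagonal (fun j => Λ n (σ j)) := by
    intro n
    calc (U₀ᵀ * M n * U₀) * W = ((U₀ᵀ * M n * U₀) * B) * Pm := by
          rw [hWdef, ← Matrix.mul_assoc (U₀ᵀ * M n * U₀) B Pm]
      _ = (B * Matrix.diagonal (Λ n)) * Pm := by rw [hcomm n]
      _ = B * (Matrix.diagonal (Λ n) * Pm) := by rw [Matrix.mul_assoc B _ Pm]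
      _ = B * (Pm * Matrix.diagonal (fun j => Λ n (σ j))) := by rw [hPmdef, diag_permM]
      _ = W * Matrix.diagonal (fun j => Λ n (σ j)) := by
          rw [hWdef, ← Matrix.mul_assoc B Pm _]
  have hAeq : ∀ n, (U₀ᵀ * M n * U₀)ᵀ
      = Wiᵀ * Matrix.diagonal (fun j => Λ n (σ j)) * Wᵀ := by
    intro n
    have h1 : U₀ᵀ * M n * U₀ = W * Matrix.diagonal (fun j => Λ n (σ j)) * Wi := by
      calc U₀ᵀ * M n * U₀ = (U₀ᵀ * M n * U₀) * (W * Wi) := by rw [hWWi, Matrix.mul_one]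
        _ = ((U₀ᵀ * M n * U₀) * W) * Wi := by
              rw [← Matrix.mul_assoc (U₀ᵀ * M n * U₀) W Wi]
        _ = (W * Matrix.diagonal (fun j => Λ n (σ j))) * Wi := by rw [hAW n]
    rw [h1]
    calc ((W * Matrix.diagonal fun j => Λ n (σ j)) * Wi)ᵀ
        = Wiᵀ * (W * Matrix.diagonal fun j => Λ n (σ j))ᵀ := Matrix.transpose_mul _ _
      _ = Wiᵀ * ((Matrix.diagonal fun j => Λ n (σ j))ᵀ * Wᵀ) := by
          rw [Matrix.transpose_mul W]
      _ = Wiᵀ * ((Matrix.diagonal fun j => Λ n (σ j)) * Wᵀ) := by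
          rw [Matrix.diagonal_transpose]
      _ = Wiᵀ * (Matrix.diagonal fun j => Λ n (σ j)) * Wᵀ := (Matrix.mul_assoc _ _ _).symm
  have hWiupper : UpperTri Wi := by
    haveI : Invertible W := invertibleOfLeftInverse _ _ hWiW
    have hbt : W.BlockTriangular id := fun i j hij => hWupper i j hij
    have hbti := Matrix.blockTriangular_inv_of_blockTriangular hbt
    have hWieq : W⁻¹ = Wi := Matrix.inv_eq_left_inv hWiW
    intro i j hij
    rw [← hWieq]
    exact hbti (show (id j : Fin d) < id i from hij)
  have hLiL : Wiᵀ * Wᵀ = 1 := by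
    rw [← Matrix.transpose_mul, hWWi, Matrix.transpose_one]
  have hLlow : LowerTri Wᵀ := fun i j hij => hWupper j i hij
  have hLilow : LowerTri Wiᵀ := fun i j hij => hWiupper j i hij
  have hgapγ' : ∀ i j : Fin d, i ≠ j →
      gapMin Λ ≤ ∑ n, (Λ n (σ i) - Λ n (σ j)) ^ 2 := by
    intro i j hij
    exact gapMin_le Λ (σ i) (σ j) (fun h => hij (σ.injective h))
  set T := ∑ n, (ttil P (U₀ᵀ * M n * U₀))ᵀ * ttil P (U₀ᵀ * M n * U₀) with hTdef
  set c := gapMin Λ * (sigMin Wiᵀ * sigMin Wᵀᵀ * sigMin Wᵀ * sigMin Wiᵀᵀ) ^ 2 with hcdef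
  -- the key unit–vector bound
  have hkey : ∀ x : Fin k → ℝ, euclNorm x = 1 → c ≤ euclNorm (T.mulVec x) := by
    intro x hx
    set X := matM (Pᵀ.mulVec x) with hXdef
    have hXlow : StrictLower X := strictLower_of_lowOp_fixed (lowOp_fix_Pt hP x)
    have hfrobX : frob X = 1 := by
      rw [hXdef, ← enorm_vecM, vecM_matM, enorm_Pt_mulVec hP, hx]
    have hcore := core_estimate Wᵀ Wiᵀ hLiL hLlow hLilow
      (fun n j => Λ n (σ j)) (gapMin Λ) hγ0 hgapγ' X hXlow
    rw [hfrobX, one_pow, mul_one] at hcore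
    have hray := rayleigh Finset.univ (fun n => ttil P (U₀ᵀ * M n * U₀)) x
    have hterm : ∀ n, euclNorm ((ttil P (U₀ᵀ * M n * U₀)).mulVec x) ^ 2
        = frob ((Wiᵀ * Matrix.diagonal (fun j => Λ n (σ j)) * Wᵀ) * X
            - X * (Wiᵀ * Matrix.diagonal (fun j => Λ n (σ j)) * Wᵀ)) ^ 2 := by
      intro n
      rw [ttil_mulVec_enorm hP (hAupper n) x, ← hXdef, hAeq n]
    have hdot : c ≤ x ⬝ᵥ (T.mulVec x) := by
      rw [hTdef, hray]
      rw [Finset.sum_congr rfl (fun n _ => hterm n)]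
      exact hcore
    calc c ≤ x ⬝ᵥ (T.mulVec x) := hdot
      _ ≤ euclNorm x * euclNorm (T.mulVec x) := JT.dot_le_enorm_mul _ _
      _ = euclNorm (T.mulVec x) := by rw [hx, one_mul]
  -- translate the singular values of W to those of V
  have hQ : U₀ᵀᵀ * U₀ᵀ = 1 := by rw [Matrix.transpose_transpose, hU₀']
  have hWassoc : W = U₀ᵀ * (V * Pm) := by rw [hWdef, hBdef, Matrix.mul_assoc]
  have hsmaxW : sigMax W = sigMax V := by
    rw [hWassoc, sigMax_ortho_mul hQ, sigMax_mul_ortho (permM_orth1 σ) (permM_orth2 σ)]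
  have hsminW : sigMin W = sigMin V := by
    rw [hWassoc, sigMin_ortho_mul hQ, sigMin_mul_ortho (permM_orth1 σ) (permM_orth2 σ)]
  have hsmaxVpos : 0 < sigMax V := sigMax_pos_of_right_inv hViV
  have hsminVpos : 0 < sigMin V := sigMin_pos hViV hVVi
  -- rewrite c
  have hs1 : sigMin Wiᵀ = (sigMax V)⁻¹ := by
    rw [sigMin_transpose hWWi hWiW, sigMin_eq_inv_sigMax hWWi hWiW, hsmaxW]
  have hs2 : sigMin Wᵀᵀ = sigMin V := by rw [Matrix.transpose_transpose, hsminW]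
  have hs3 : sigMin Wᵀ = sigMin V := by rw [sigMin_transpose hWiW hWWi, hsminW]
  have hs4 : sigMin Wiᵀᵀ = (sigMax V)⁻¹ := by
    rw [Matrix.transpose_transpose, sigMin_eq_inv_sigMax hWWi hWiW, hsmaxW]
  have hceq : c = gapMin Λ * ((sigMax V)⁻¹ * sigMin V * sigMin V * (sigMax V)⁻¹) ^ 2 := by
    rw [hcdef, hs1, hs2, hs3, hs4]
  have hcpos : 0 < c := by
    rw [hceq]
    have h1 : 0 < (sigMax V)⁻¹ * sigMin V * sigMin V * (sigMax V)⁻¹ := by positivity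
    positivity
  have hcform : c = gapMin Λ / condNum V ^ 4 := by
    rw [hceq]
    unfold condNum
    field_simp
  -- conclusion 1 : invertibility
  have hTunit : IsUnit T := by
    rw [← Matrix.mulVec_injective_iff_isUnit]
    intro a b hab
    by_contra hne
    have hu : a - b ≠ 0 := sub_ne_zero.2 hne
    have hTu : T.mulVec (a - b) = 0 := by
      rw [Matrix.mulVec_sub, hab, sub_self]
    have hen : euclNorm (a - b) ≠ 0 := fun h => hu (enorm_eq_zero.1 h)
    have hpos : 0 < euclNorm (a - b) := lt_of_le_of_ne (enorm_nonneg _) (Ne.symm hen)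
    have hunit : euclNorm ((euclNorm (a - b))⁻¹ • (a - b)) = 1 := by
      rw [JT.enorm_smul, abs_of_pos (by positivity), inv_mul_cancel₀ hen]
    have h0 : T.mulVec ((euclNorm (a - b))⁻¹ • (a - b)) = 0 := by
      rw [Matrix.mulVec_smul, hTu, smul_zero]
    have := hkey _ hunit
    rw [h0, JT.enorm_eq_zero.2 rfl] at this
    linarith
  refine ⟨hTunit, ?_, ?_⟩
  · rw [← hcform]
    exact le_sigMin T (fun x hx => hkey x hx)
  · -- third bound
    have hTdet2 : IsUnit T.det := (Matrix.isUnit_iff_isUnit_det T).1 hTunit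
    have hTiT : T⁻¹ * T = 1 := Matrix.nonsing_inv_mul T hTdet2
    have hTTi : T * T⁻¹ = 1 := Matrix.mul_nonsing_inv T hTdet2
    have hminT : c ≤ sigMin T := le_sigMin T (fun x hx => hkey x hx)
    have hminTpos : 0 < sigMin T := lt_of_lt_of_le hcpos hminT
    have h2 : sigMin T = (sigMax T⁻¹)⁻¹ := sigMin_eq_inv_sigMax hTiT hTTi
    have h3 : sigMax T⁻¹ = (sigMin T)⁻¹ := by rw [h2, inv_inv]
    have h4 : frob T⁻¹ ≤ Real.sqrt (Fintype.card (Fin k)) * sigMax T⁻¹ :=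
      frob_le_sqrt_card_mul_sigMax T⁻¹
    have h5 : (sigMin T)⁻¹ ≤ c⁻¹ := inv_anti₀ hcpos hminT
    have hcard : (Fintype.card (Fin k) : ℝ) = (d : ℝ) * ((d : ℝ) - 1) / 2 := by
      rw [Fintype.card_fin]
      have hcast : 2 * (k : ℝ) = (d : ℝ) * ((d : ℝ) - 1) := by
        have := hk
        have h6 : ((2 * k : ℕ) : ℝ) = ((d * (d - 1) : ℕ) : ℝ) := by rw [this]
        push_cast [Nat.cast_sub (show 1 ≤ d by omega)] at h6
        linarith
      linarith
    have hcinv : c⁻¹ = condNum V ^ 4 / gapMin Λ := by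
      rw [hcform]
      field_simp
    calc frob T⁻¹ ≤ Real.sqrt (Fintype.card (Fin k)) * sigMax T⁻¹ := h4
      _ = Real.sqrt ((d : ℝ) * ((d : ℝ) - 1) / 2) * (sigMin T)⁻¹ := by rw [hcard, h3]
      _ ≤ Real.sqrt ((d : ℝ) * ((d : ℝ) - 1) / 2) * c⁻¹ := by
          exact mul_le_mul_of_nonneg_left h5 (Real.sqrt_nonneg _)
      _ = Real.sqrt ((d : ℝ) * ((d : ℝ) - 1) / 2) * condNum V ^ 4 / gapMin Λ := by
          rw [hcinv]; ring
end
end
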